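/- Let ρ and ρ_M be density operators on an mn-dimensional Hilbert space, Π_V a rank-k orthogonal projection, Λ ∈ (0,1), and δ > 0 with Tr(ρ Π_V) = Λ + δ. Then for any p ∈ [0,1] satisfying p < δ / (Λ + δ + ‖ρ_M‖_(mn−k) − 1) (assuming the denominator is positive), the mixture (1−p)ρ + p·ρ_M satisfies Tr(((1−p)ρ + p ρ_M) Π_V) > Λ. -/

import Mathlib

open Matrix
open scoped ComplexOrder

/-- Sort a finite tuple of reals in non-increasing order. -/
noncomputable def descSort {n : ℕ} (f : Fin n → ℝ) : Fin n → ℝ :=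
  fun i => f (Tuple.sort f i.rev)

/-- The sum of the `j` largest entries of a tuple of reals (the Ky Fan `j`-norm
when applied to the eigenvalues of a density operator). -/
noncomputable def kyFan {d : ℕ} (f : Fin d → ℝ) (j : ℕ) : ℝ :=
  ∑ i ∈ Finset.univ.filter (fun i : Fin d => (i : ℕ) < j), descSort f i

lemma descSort_antitone {d : ℕ} (f : Fin d → ℝ) : Antitone (descSort f) := by
  intro i j hij
  exact Tuple.monotone_sort f (Fin.rev_le_rev.mpr hij)

lemma bathtub {d r : ℕ} (hr : r ≤ d) (g q : Fin d → ℝ) (hg : Antitone g)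
    (hq0 : ∀ i, 0 ≤ q i) (hq1 : ∀ i, q i ≤ 1) (hqs : ∑ i, q i = r) :
    ∑ i, g i * q i ≤ ∑ i ∈ Finset.univ.filter (fun i : Fin d => (i : ℕ) < r), g i := by
  rcases eq_or_lt_of_le hr with hrd | hrd
  · have hq : ∀ i, q i = 1 := by
      have h0 : ∑ i : Fin d, (1 - q i) = 0 := by
        rw [Finset.sum_sub_distrib, hqs]
        simp [← hrd]
      intro i
      have := (Finset.sum_eq_zero_iff_of_nonneg (fun i _ => by linarith [hq1 i])).mp h0 i
        (Finset.mem_univ i)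
      linarith
    have hfil : Finset.univ.filter (fun i : Fin d => (i : ℕ) < r) = Finset.univ := by
      apply Finset.filter_true_of_mem
      intro i _
      exact hrd ▸ i.isLt
    simp [hfil, hq]
  · have hind : ∑ i : Fin d, (if (i : ℕ) < r then (1 : ℝ) else 0) = r := by
      rw [← Finset.sum_filter]
      have : Finset.univ.filter (fun i : Fin d => (i : ℕ) < r)
          = (Finset.range r).attachFin (fun m hm => lt_trans (Finset.mem_range.mp hm) hrd) := by
        ext i
        simp [Finset.mem_attachFin]
      rw [this]
      simp [Finset.card_attachFin]
    have key : ∀ i : Fin d, g i * q i ≤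
        g ⟨r, hrd⟩ * (q i - if (i : ℕ) < r then 1 else 0) + (if (i : ℕ) < r then g i else 0) := by
      intro i
      by_cases h : (i : ℕ) < r
      · have hgi : g ⟨r, hrd⟩ ≤ g i := hg (by simp [Fin.le_def]; omega)
        have := hq1 i
        simp only [h, if_true]
        nlinarith
      · have hgi : g i ≤ g ⟨r, hrd⟩ := hg (by simp [Fin.le_def]; omega)
        have := hq0 i
        simp only [h, if_false]
        nlinarith
    have hsum := Finset.sum_le_sum (fun i (_ : i ∈ Finset.univ) => key i)
    rw [Finset.sum_add_distrib, ← Finset.mul_sum, Finset.sum_sub_distrib, hqs, hind,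
      ← Finset.sum_filter] at hsum
    simpa using hsum

lemma sum_mul_descSort {d : ℕ} (f q : Fin d → ℝ) :
    ∑ i, f i * q i = ∑ i, descSort f i * q (Tuple.sort f i.rev) := by
  have := Equiv.sum_comp ((Fin.revPerm).trans (Tuple.sort f)) (fun i => f i * q i)
  rw [← this]
  rfl

lemma psd_diag_re_nonneg {d : ℕ} {M : Matrix (Fin d) (Fin d) ℂ} (hM : M.PosSemidef)
    (i : Fin d) : 0 ≤ (M i i).re := by
  have h : 0 ≤ M i i := hM.diag_nonneg
  exact (Complex.le_def.mp h).1

/-- Ky Fan bound: for `A` PSD and `Q` an orthogonal projection of rank `r`,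
`Re Tr(A Q)` is at most the sum of the `r` largest eigenvalues of `A`. -/
lemma trace_mul_le_kyFan {d r : ℕ} (hr : r ≤ d) (A Q : Matrix (Fin d) (Fin d) ℂ)
    (hA : A.PosSemidef) (hQ : Q.IsHermitian) (hQ2 : Q * Q = Q) (hQtr : Q.trace = (r : ℂ)) :
    ((A * Q).trace).re ≤ kyFan hA.1.eigenvalues r := by
  have hH := hA.1
  set U : Matrix (Fin d) (Fin d) ℂ := (hH.eigenvectorUnitary : Matrix (Fin d) (Fin d) ℂ) with hU
  have hUU : U * star U = 1 := (Matrix.mem_unitaryGroup_iff).mp hH.eigenvectorUnitary.2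
  set M : Matrix (Fin d) (Fin d) ℂ := star U * Q * U with hM
  have hMherm : M.IsHermitian := by
    unfold Matrix.IsHermitian
    rw [hM, conjTranspose_mul, conjTranspose_mul, hQ.eq]
    simp [star_eq_conjTranspose, Matrix.mul_assoc]
  have hMidem : M * M = M := by
    rw [hM]
    simp only [Matrix.mul_assoc]
    rw [show U * (star U * (Q * U)) = (U * star U) * (Q * U) from (Matrix.mul_assoc _ _ _).symm,
      hUU, Matrix.one_mul,
      show Q * (Q * U) = (Q * Q) * U from (Matrix.mul_assoc _ _ _).symm, hQ2]
  have hMpsd : M.PosSemidef := by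
    have h : M = Mᴴ * M := by rw [hMherm.eq]; exact hMidem.symm
    rw [h]; exact Matrix.posSemidef_conjTranspose_mul_self M
  have h1Mpsd : (1 - M).PosSemidef := by
    have hherm : (1 - M).IsHermitian := (Matrix.isHermitian_one).sub hMherm
    have hidem : (1 - M) * (1 - M) = 1 - M := by
      rw [Matrix.sub_mul, Matrix.mul_sub, Matrix.mul_sub, hMidem]
      noncomm_ring
    have h : (1 - M) = (1 - M)ᴴ * (1 - M) := by rw [hherm.eq]; exact hidem.symm
    rw [h]; exact Matrix.posSemidef_conjTranspose_mul_self _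
  have htrAQ : (A * Q).trace = (Matrix.diagonal (RCLike.ofReal ∘ hH.eigenvalues) * M).trace := by
    conv_lhs => rw [hH.spectral_theorem, Unitary.conjStarAlgAut_apply]
    rw [Matrix.mul_assoc, Matrix.mul_assoc, Matrix.trace_mul_comm, hM]
    rw [Matrix.mul_assoc, Matrix.mul_assoc]
  have hdiagtr : ((Matrix.diagonal (RCLike.ofReal ∘ hH.eigenvalues) * M).trace).re
      = ∑ i, hH.eigenvalues i * (M i i).re := by
    rw [Matrix.trace, Complex.re_sum]
    congr 1; ext i
    simp [Matrix.diag, Matrix.diagonal_mul, Complex.re_ofReal_mul]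
  have hq0 : ∀ i, 0 ≤ (M i i).re := fun i => psd_diag_re_nonneg hMpsd i
  have hq1 : ∀ i, (M i i).re ≤ 1 := by
    intro i
    have := psd_diag_re_nonneg h1Mpsd i
    simp [Matrix.sub_apply, Matrix.one_apply, Complex.sub_re] at this
    linarith
  have hMtr : M.trace = Q.trace := by
    rw [hM, Matrix.trace_mul_comm, ← Matrix.mul_assoc, hUU, Matrix.one_mul]
  have hqsum : ∑ i, (M i i).re = (r : ℝ) := by
    have h1 : (M.trace).re = (r : ℝ) := by rw [hMtr, hQtr]; simp
    rw [Matrix.trace, Complex.re_sum] at h1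
    exact h1
  have hkey : ((A * Q).trace).re = ∑ i, hH.eigenvalues i * (M i i).re := by
    rw [htrAQ, hdiagtr]
  rw [hkey, sum_mul_descSort]
  have hqsum' : ∑ i : Fin d,
      (M (Tuple.sort hH.eigenvalues i.rev) (Tuple.sort hH.eigenvalues i.rev)).re = (r : ℝ) := by
    have h2 := Equiv.sum_comp ((Fin.revPerm).trans (Tuple.sort hH.eigenvalues))
      (fun j => (M j j).re)
    simpa using h2.trans hqsum
  exact bathtub hr (descSort hH.eigenvalues)
    (fun i => (M (Tuple.sort hH.eigenvalues i.rev) (Tuple.sort hH.eigenvalues i.rev)).re)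
    (descSort_antitone _) (fun i => hq0 _) (fun i => hq1 _) hqsum'

/-- Robustness of entanglement: if `Tr(ρ Π_V) = Λ + δ` and
`p < δ / (Λ + δ + ‖ρ_M‖_(mn-k) - 1)`, then the mixture `(1-p)ρ + p ρ_M`
still violates the separability bound `Tr(σ Π_V) ≤ Λ`. -/
theorem stmt16 {m n k : ℕ} (hk : k ≤ m * n)
    (ρ ρM P : Matrix (Fin (m * n)) (Fin (m * n)) ℂ)
    (hρ : ρ.PosSemidef) (hρtr : ρ.trace = 1)
    (hρM : ρM.PosSemidef) (hρMtr : ρM.trace = 1)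
    (hP : P.IsHermitian) (hP2 : P * P = P) (hPtr : P.trace = (k : ℂ))
    (Λ δ : ℝ) (hΛ0 : 0 < Λ) (hΛ1 : Λ < 1) (hδ : 0 < δ)
    (htr : ((ρ * P).trace).re = Λ + δ)
    (p : ℝ) (hp0 : 0 ≤ p) (hp1 : p ≤ 1)
    (hden : 0 < Λ + δ + kyFan hρM.1.eigenvalues (m * n - k) - 1)
    (hpb : p < δ / (Λ + δ + kyFan hρM.1.eigenvalues (m * n - k) - 1)) :
    Λ < ((((1 - p : ℝ) • ρ + (p : ℝ) • ρM) * P).trace).re := by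
  set K := kyFan hρM.1.eigenvalues (m * n - k) with hK
  -- the complementary projection
  have hQherm : (1 - P).IsHermitian := (Matrix.isHermitian_one).sub hP
  have hQ2 : (1 - P) * (1 - P) = 1 - P := by
    rw [Matrix.sub_mul, Matrix.mul_sub, Matrix.mul_sub, hP2]
    noncomm_ring
  have hQtr : (1 - P).trace = ((m * n - k : ℕ) : ℂ) := by
    rw [Matrix.trace_sub, Matrix.trace_one, hPtr]
    push_cast [Nat.cast_sub hk]
    simp
  have hKF := trace_mul_le_kyFan (Nat.sub_le _ _) ρM (1 - P) hρM hQherm hQ2 hQtr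
  have hsplit : (ρM * (1 - P)).trace = 1 - (ρM * P).trace := by
    rw [Matrix.mul_sub, Matrix.mul_one, Matrix.trace_sub, hρMtr]
  have ht : 1 - K ≤ ((ρM * P).trace).re := by
    rw [hsplit] at hKF
    simp only [Complex.sub_re, Complex.one_re] at hKF
    rw [hK]
    linarith
  have hexp : ((((1 - p : ℝ) • ρ + (p : ℝ) • ρM) * P).trace).re
      = (1 - p) * ((ρ * P).trace).re + p * ((ρM * P).trace).re := by
    rw [Matrix.add_mul, Matrix.smul_mul, Matrix.smul_mul, Matrix.trace_add,
      Matrix.trace_smul, Matrix.trace_smul, Complex.add_re, Complex.smul_re, Complex.smul_re]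
    simp [smul_eq_mul]
  rw [hexp, htr]
  have hpb' : p * (Λ + δ + K - 1) < δ := (lt_div_iff₀ hden).mp hpb
  nlinarith [mul_le_mul_of_nonneg_left ht hp0]
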